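/- Let p be a natural number with p ≥ 2 and let T be a linear operator on ℓ_p² (ℝ² with the p-norm) that is not a scalar multiple of an isometry. Then the norm attainment set M_T = {x : ‖x‖_p = 1, ‖Tx‖_p = ‖T‖} has at most 2(8p − 5) elements. -/

import Mathlib

open scoped ENNReal

/-- Birkhoff-James orthogonality: `u ⊥_B v` iff `‖u + λ v‖ ≥ ‖u‖` for all real `λ`. -/
def BJOrth {E : Type*} [NormedAddCommGroup E] [NormedSpace ℝ E] (u v : E) : Prop :=
  ∀ l : ℝ, ‖u‖ ≤ ‖u + l • v‖

namespace Stmt17Aux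

open Polynomial

noncomputable def sfun (p : ℕ) (w : ℝ) : ℝ := |w| ^ (p - 2) * w

lemma sfun_mul (p : ℕ) (x y : ℝ) : sfun p (x * y) = sfun p x * sfun p y := by
  simp only [sfun, abs_mul, mul_pow]; ring

lemma sfun_eq_zero_iff (p : ℕ) (x : ℝ) : sfun p x = 0 ↔ x = 0 := by
  simp only [sfun, mul_eq_zero, pow_eq_zero_iff', abs_eq_zero]
  tauto

lemma sfun_sigma (p : ℕ) (hp : 2 ≤ p) (t : ℝ) :
    sfun p t = (if 0 ≤ t then (1:ℝ) else (-1)^p) * t ^ (p - 1) := by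
  rcases le_or_gt 0 t with h | h
  · rw [if_pos h, one_mul, sfun, abs_of_nonneg h, ← pow_succ]
    congr 1; omega
  · rw [if_neg (not_le.mpr h), sfun, abs_of_neg h, neg_pow, mul_assoc, ← pow_succ]
    have h2 : p - 2 + 1 = p - 1 := by omega
    rw [h2]
    have h3 : (-1:ℝ)^(p-2) = (-1)^p := by
      have : p = (p - 2) + 2 := by omega
      rw [this, pow_add]; norm_num
    rw [h3]

lemma sfun_sq (p : ℕ) (hp : 2 ≤ p) (w : ℝ) : (sfun p w) ^ 2 = w ^ (2 * (p - 1)) := by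
  have : (sfun p w)^2 = (|w|^2)^(p-2) * w^2 := by simp only [sfun]; ring
  rw [this, sq_abs, ← pow_mul, ← pow_add]
  congr 1; omega

lemma abs_pow_eq_rpow (p : ℕ) (hp : 2 ≤ p) (z : ℝ) :
    |z| ^ p = (z ^ 2) ^ ((p : ℝ) / 2) := by
  have h1 : z ^ 2 = |z| ^ (2:ℕ) := (sq_abs z).symm
  rw [h1, ← Real.rpow_natCast |z| 2, ← Real.rpow_mul (abs_nonneg z)]
  have : ((2:ℕ):ℝ) * ((p:ℝ)/2) = (p:ℝ) := by push_cast; ring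
  rw [this, Real.rpow_natCast]

lemma hasDerivAt_abs_pow (p : ℕ) (hp : 2 ≤ p) (w : ℝ) :
    HasDerivAt (fun z : ℝ => |z| ^ p) ((p : ℝ) * (|w| ^ (p - 2) * w)) w := by
  have inner : HasDerivAt (fun z : ℝ => z ^ 2) (2 * w) w := by
    simpa using hasDerivAt_pow 2 w
  have comp : HasDerivAt (fun z : ℝ => (z ^ 2) ^ ((p : ℝ) / 2))
      ((2 * w) * ((p : ℝ) / 2) * (w ^ 2) ^ ((p : ℝ) / 2 - 1)) w := by
    apply inner.rpow_const
    right
    have : (2:ℝ) ≤ (p:ℝ) := by exact_mod_cast hp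
    linarith
  have hfun : (fun z : ℝ => |z| ^ p) = fun z : ℝ => (z ^ 2) ^ ((p : ℝ) / 2) := by
    funext z; exact abs_pow_eq_rpow p hp z
  rw [hfun]
  convert comp using 1
  have h2 : (w ^ 2) ^ ((p : ℝ) / 2 - 1) = |w| ^ (p - 2) := by
    have h1 : w ^ 2 = |w| ^ (2:ℕ) := (sq_abs w).symm
    rw [h1, ← Real.rpow_natCast |w| 2, ← Real.rpow_mul (abs_nonneg w)]
    have : ((2:ℕ):ℝ) * ((p:ℝ)/2 - 1) = ((p - 2 : ℕ) : ℝ) := by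
      push_cast [Nat.cast_sub hp]
      ring
    rw [this, Real.rpow_natCast]
  rw [h2]; ring

lemma hasDerivAt_abs_affine (p : ℕ) (hp : 2 ≤ p) (c d : ℝ) :
    HasDerivAt (fun h : ℝ => |c + d * h| ^ p) ((p : ℝ) * sfun p c * d) 0 := by
  have inner : HasDerivAt (fun h : ℝ => c + d * h) d 0 := by
    simpa using ((hasDerivAt_id (0:ℝ)).const_mul d).const_add c
  have outer := hasDerivAt_abs_pow p hp (c + d * 0)
  have := outer.comp 0 inner
  simpa [sfun, Function.comp_def, mul_comm, mul_assoc, mul_left_comm] using this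

lemma one_dir (p : ℕ) (hp : 2 ≤ p) (α β γ δ Cn a b : ℝ)
    (hub : ∀ u v : ℝ, |α*u+β*v|^p + |γ*u+δ*v|^p ≤ Cn * (|u|^p + |v|^p))
    (heq : |α*a+β*b|^p + |γ*a+δ*b|^p = Cn * (|a|^p + |b|^p)) :
    α * sfun p (α*a+β*b) + γ * sfun p (γ*a+δ*b) = Cn * sfun p a := by
  have hp0 : ((p:ℝ)) ≠ 0 := by
    have : 0 < p := by omega
    exact_mod_cast this.ne'
  set g : ℝ → ℝ := fun h =>
    |(α*a+β*b) + α*h|^p + |(γ*a+δ*b) + γ*h|^p - Cn * (|a + 1*h|^p + |b|^p) with hg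
  have hd : HasDerivAt g
      ((p:ℝ) * sfun p (α*a+β*b) * α + (p:ℝ) * sfun p (γ*a+δ*b) * γ
        - Cn * ((p:ℝ) * sfun p a * 1 + 0)) 0 := by
    have h1 := hasDerivAt_abs_affine p hp (α*a+β*b) α
    have h2 := hasDerivAt_abs_affine p hp (γ*a+δ*b) γ
    have h3 := hasDerivAt_abs_affine p hp a 1
    exact ((h1.add h2).sub (((h3.add (hasDerivAt_const 0 (|b|^p)))).const_mul Cn))
  have hmax : IsLocalMax g 0 := by
    apply Filter.Eventually.of_forall
    intro h
    have h1 : g h ≤ 0 := by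
      rw [hg]
      have hub' := hub (a + h) b
      calc |(α*a+β*b) + α*h|^p + |(γ*a+δ*b) + γ*h|^p - Cn * (|a + 1*h|^p + |b|^p)
          = |α*(a+h)+β*b|^p + |γ*(a+h)+δ*b|^p - Cn * (|a+h|^p + |b|^p) := by ring_nf
        _ ≤ 0 := by linarith
    have h2 : g 0 = 0 := by
      rw [hg]; simp only [mul_zero, add_zero, one_mul]
      linarith [heq]
    rw [h2]; exact h1
  have hz := hmax.hasDerivAt_eq_zero hd
  have h4 : (p:ℝ) * (α * sfun p (α*a+β*b) + γ * sfun p (γ*a+δ*b) - Cn * sfun p a) = 0 := by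
    linear_combination hz
  rcases mul_eq_zero.mp h4 with h | h
  · exact absurd h hp0
  · linarith

lemma prop_of_identities (p q : ℕ) (hq1 : 1 ≤ q) (hpq : p = q + 1)
    (α β γ δ Cn σ e e' : ℝ)
    (hD : α*δ - β*γ ≠ 0) (hCn : 0 < Cn)
    (hσ : σ = 1 ∨ σ = -1) (hσ1 : q = 1 → σ = 1)
    (he : e = Cn ∨ e = -Cn) (he' : e' = Cn ∨ e' = -Cn)
    (hI : ∀ t : ℝ, (α*δ-β*γ) * (α + β*t)^q = e * (δ - σ*γ*t^q))
    (hII : ∀ t : ℝ, (α*δ-β*γ) * (γ + δ*t)^q = e' * (σ*α*t^q - β)) :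
    ∀ a b : ℝ, |α*a+β*b|^p + |γ*a+δ*b|^p = Cn * (|a|^p + |b|^p) := by
  have he0 : e ≠ 0 := by rcases he with rfl | rfl <;> [exact hCn.ne'; exact (neg_ne_zero.mpr hCn.ne')]
  have he'0 : e' ≠ 0 := by rcases he' with rfl | rfl <;> [exact hCn.ne'; exact (neg_ne_zero.mpr hCn.ne')]
  have habse : |e| = Cn := by rcases he with rfl | rfl <;> simp [abs_of_pos hCn]
  have habse' : |e'| = Cn := by rcases he' with rfl | rfl <;> simp [abs_of_pos hCn]
  have hσ0 : σ ≠ 0 := by rcases hσ with rfl | rfl <;> norm_num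
  have habsσ : |σ| = 1 := by rcases hσ with rfl | rfl <;> norm_num
  have hzq : (0:ℝ)^q = 0 := zero_pow (by omega)
  by_cases hβ : β = 0
  · subst hβ
    have h0 := hI 0
    have h1 := hI 1
    rw [mul_zero, add_zero, hzq] at h0
    rw [mul_one, add_zero, one_pow] at h1
    have hγ : γ = 0 := by
      have : e * (σ * γ) = 0 := by linarith [h0, h1]
      rcases mul_eq_zero.mp this with h | h
      · exact absurd h he0
      · rcases mul_eq_zero.mp h with h | h
        · exact absurd h hσ0
        · exact h
    subst hγ
    have hαδ : α * δ ≠ 0 := by simpa using hD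
    have hα : α ≠ 0 := fun h => hαδ (by simp [h])
    have hδ : δ ≠ 0 := fun h => hαδ (by simp [h])
    have hA : α ^ p = e := by
      have : δ * (α ^ p - e) = 0 := by
        rw [hpq, pow_succ]
        linear_combination h0
      rcases mul_eq_zero.mp this with h | h
      · exact absurd h hδ
      · linarith [sub_eq_zero.mp h]
    have hB : δ ^ p = e' * σ := by
      have h2 := hII 1
      rw [mul_one, one_pow] at h2
      have : α * (δ ^ p - e' * σ) = 0 := by
        rw [hpq, pow_succ]
        linear_combination h2
      rcases mul_eq_zero.mp this with h | h
      · exact absurd h hα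
      · linarith [sub_eq_zero.mp h]
    have hAp : |α| ^ p = Cn := by rw [← abs_pow, hA, habse]
    have hBp : |δ| ^ p = Cn := by rw [← abs_pow, hB, abs_mul, habse', habsσ, mul_one]
    intro a b
    have e1 : |α * a + 0 * b| ^ p = Cn * |a| ^ p := by
      rw [zero_mul, add_zero, abs_mul, mul_pow, hAp]
    have e2 : |(0:ℝ) * a + δ * b| ^ p = Cn * |b| ^ p := by
      rw [zero_mul, zero_add, abs_mul, mul_pow, hBp]
    rw [e1, e2]; ring
  · by_cases hq2 : q = 1
    · have hσe : σ = 1 := hσ1 hq2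
      subst hσe
      subst hq2
      have hp2 : p = 2 := by omega
      subst hp2
      have I0 := hI 0
      have I1 := hI 1
      have II0 := hII 0
      have II1 := hII 1
      simp only [mul_zero, add_zero, mul_one, pow_one, one_mul, zero_mul] at I0 I1 II0 II1
      have hI0 : (α*δ-β*γ) * α = e * δ := by linarith [I0]
      have hI1 : (α*δ-β*γ) * β = -(e * γ) := by linarith [I1, hI0]
      have hII0 : (α*δ-β*γ) * γ = -(e' * β) := by linarith [II0]
      have hII1 : (α*δ-β*γ) * δ = e' * α := by linarith [II1, hII0]
      have hDsq : (α*δ-β*γ)^2 = e * (γ^2 + δ^2) := by linear_combination δ * hI0 - γ * hI1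
      have hDsq' : (α*δ-β*γ)^2 = e' * (α^2 + β^2) := by linear_combination α * hII1 - β * hII0
      have hDpos : 0 < (α*δ-β*γ)^2 := by positivity
      have hγδ : 0 < γ^2 + δ^2 := by
        rcases eq_or_ne γ 0 with h | h
        · rcases eq_or_ne δ 0 with h2 | h2
          · exfalso; apply hD; rw [h, h2]; ring
          · positivity
        · positivity
      have hαβ : 0 < α^2 + β^2 := by positivity
      have hepos : 0 < e := by by_contra h; push_neg at h; nlinarith
      have he'pos : 0 < e' := by by_contra h; push_neg at h; nlinarith
      have heCn : e = Cn := by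
        rcases he with h | h
        · exact h
        · exfalso; rw [h] at hepos; linarith
      have he'Cn : e' = Cn := by
        rcases he' with h | h
        · exact h
        · exfalso; rw [h] at he'pos; linarith
      rw [heCn] at hI0 hI1
      rw [he'Cn] at hII0 hII1
      have K1 : α*β + γ*δ = 0 := by
        have h : (α*δ-β*γ) * (α*β + γ*δ) = 0 := by linear_combination β * hI0 + δ * hII0
        rcases mul_eq_zero.mp h with h | h
        · exact absurd h hD
        · exact h
      have K2 : α^2 + γ^2 = Cn := by
        have h : (α*δ-β*γ) * (α^2 + γ^2 - Cn) = 0 := by linear_combination α * hI0 + γ * hII0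
        rcases mul_eq_zero.mp h with h | h
        · exact absurd h hD
        · linarith [sub_eq_zero.mp h]
      have K3 : β^2 + δ^2 = Cn := by
        have h : (α*δ-β*γ) * (β^2 + δ^2 - Cn) = 0 := by linear_combination β * hI1 + δ * hII1
        rcases mul_eq_zero.mp h with h | h
        · exact absurd h hD
        · linarith [sub_eq_zero.mp h]
      intro a b
      rw [sq_abs, sq_abs, sq_abs, sq_abs]
      linear_combination (a^2) * K2 + (2*a*b) * K1 + (b^2) * K3
    · have hq2' : 2 ≤ q := by omega
      by_cases hα : α = 0
      · subst hα
        have I0 := hI 0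
        rw [mul_zero, add_zero, hzq] at I0
        have hδ : δ = 0 := by
          have : e * δ = 0 := by linear_combination -I0
          rcases mul_eq_zero.mp this with h | h
          · exact absurd h he0
          · exact h
        subst hδ
        have hβγ : β * γ ≠ 0 := by
          intro h; apply hD; nlinarith [h]
        have hγ : γ ≠ 0 := fun h => hβγ (by simp [h])
        have I1 := hI 1
        rw [mul_one, zero_add, one_pow] at I1
        have hBp : β ^ p = e * σ := by
          have h : γ * (β ^ p - e * σ) = 0 := by
            rw [hpq, pow_succ]
            linear_combination -I1
          rcases mul_eq_zero.mp h with h | h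
          · exact absurd h hγ
          · linarith [sub_eq_zero.mp h]
        have II0 := hII 0
        rw [mul_zero, add_zero, hzq] at II0
        have hGp : γ ^ p = e' := by
          have h : β * (γ ^ p - e') = 0 := by
            rw [hpq, pow_succ]
            linear_combination -II0
          rcases mul_eq_zero.mp h with h | h
          · exact absurd h hβ
          · linarith [sub_eq_zero.mp h]
        have hBa : |β| ^ p = Cn := by rw [← abs_pow, hBp, abs_mul, habse, habsσ, mul_one]
        have hGa : |γ| ^ p = Cn := by rw [← abs_pow, hGp, habse']
        intro a b
        rw [zero_mul, zero_add, zero_mul, add_zero, abs_mul, abs_mul, mul_pow, mul_pow, hBa, hGa]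
        ring
      · exfalso
        set ts : ℝ := -α/β with hts
        have h1 : α + β * ts = 0 := by rw [hts, mul_div_assoc', mul_div_cancel_left₀ _ hβ]; ring
        have h2 : α + β * (2*ts) = -α := by linear_combination 2 * h1
        have Istar := hI ts
        rw [h1, zero_pow (by omega : q ≠ 0)] at Istar
        have hδs : δ = σ * γ * ts ^ q := by
          have : e * (δ - σ*γ*ts^q) = 0 := by linarith [Istar]
          rcases mul_eq_zero.mp this with h | h
          · exact absurd h he0
          · linarith [sub_eq_zero.mp h]
        have I0 := hI 0
        rw [mul_zero, add_zero, hzq] at I0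
        have I0' : (α*δ-β*γ) * α ^ q = e * δ := by
          rw [I0]; ring
        have I2 := hI (2*ts)
        rw [h2] at I2
        rw [neg_pow, mul_pow] at I2
        have key : (α*δ-β*γ) * α^q * ((-1:ℝ)^q + 2^q - 1) = 0 := by
          linear_combination I2 + ((2:ℝ)^q - 1) * I0' + e * 2^q * hδs
        have hDα : (α*δ-β*γ) * α^q ≠ 0 := mul_ne_zero hD (pow_ne_zero q hα)
        rcases mul_eq_zero.mp key with h | h
        · exact hDα h
        · rcases Nat.even_or_odd q with hev | hod
          · rw [hev.neg_one_pow] at h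
            have : (0:ℝ) < 2^q := by positivity
            linarith
          · rw [hod.neg_one_pow] at h
            have : (2:ℝ)^2 ≤ 2^q := pow_le_pow_right₀ (by norm_num) hq2'
            norm_num at this
            linarith

noncomputable def Ppoly (q : ℕ) (D u0 u1 Cn w0 w1 : ℝ) : Polynomial ℝ :=
  (C D * (C u0 + C u1 * X)^q)^2 - (C Cn * (C w0 + C w1 * X^q))^2

lemma Ppoly_natDegree (q : ℕ) (D u0 u1 Cn w0 w1 : ℝ) :
    (Ppoly q D u0 u1 Cn w0 w1).natDegree ≤ 2*q := by
  unfold Ppoly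
  compute_degree

lemma Ppoly_eval (q : ℕ) (D u0 u1 Cn w0 w1 t : ℝ) :
    (Ppoly q D u0 u1 Cn w0 w1).eval t
      = (D * (u0 + u1*t)^q)^2 - (Cn * (w0 + w1*t^q))^2 := by
  simp [Ppoly]

lemma Ppoly_zero_cases (q : ℕ) (D u0 u1 Cn w0 w1 : ℝ)
    (h : Ppoly q D u0 u1 Cn w0 w1 = 0) :
    (∀ t : ℝ, D * (u0 + u1*t)^q = Cn * (w0 + w1*t^q)) ∨
    (∀ t : ℝ, D * (u0 + u1*t)^q = -(Cn * (w0 + w1*t^q))) := by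
  set A : Polynomial ℝ := C D * (C u0 + C u1 * X)^q with hA
  set B : Polynomial ℝ := C Cn * (C w0 + C w1 * X^q) with hB
  have hfac : (A - B) * (A + B) = 0 := by
    rw [← h]; unfold Ppoly; rw [hA, hB]; ring
  rcases mul_eq_zero.mp hfac with h2 | h2
  · left
    intro t
    have := congrArg (Polynomial.eval t) (sub_eq_zero.mp h2)
    simpa [hA, hB] using this
  · right
    intro t
    have h3 : A = -B := by linear_combination h2
    have := congrArg (Polynomial.eval t) h3
    simpa [hA, hB] using this

noncomputable def Spoly (q : ℕ) (c0 c1 : ℝ) : Polynomial ℝ := C c0 * X^q - C c1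

lemma Spoly_natDegree (q : ℕ) (c0 c1 : ℝ) : (Spoly q c0 c1).natDegree ≤ q := by
  unfold Spoly
  compute_degree

lemma Spoly_ne_zero (q : ℕ) (hq : 1 ≤ q) (c0 c1 : ℝ) (hc0 : c0 ≠ 0) :
    Spoly q c0 c1 ≠ 0 := by
  intro h
  have := congrArg (fun f => Polynomial.coeff f q) h
  simp only [Spoly, Polynomial.coeff_sub, Polynomial.coeff_C_mul, Polynomial.coeff_X_pow,
    if_pos rfl, Polynomial.coeff_C, Polynomial.coeff_zero] at this
  rw [if_neg (by omega : ¬ q = 0)] at this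
  simp at this
  exact hc0 this

lemma Spoly_eval (q : ℕ) (c0 c1 t : ℝ) : (Spoly q c0 c1).eval t = c0 * t^q - c1 := by
  simp [Spoly]

lemma endgame (p : ℕ) (hp : 2 ≤ p) [Fact (1 ≤ (p : ℝ≥0∞))]
    (M : Set (PiLp (p:ℝ≥0∞) (fun _ : Fin 2 => ℝ))) (W : Finset ℝ)
    (hW : W.card ≤ 4 * (p - 1))
    (hnorm : ∀ x ∈ M, |x 0| ^ p + |x 1| ^ p = 1)
    (ht : ∀ x ∈ M, x 0 ≠ 0 → x 1 / x 0 ∈ W) :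
    M.Finite ∧ M.ncard ≤ 2 * (8 * p - 5) := by
  classical
  set f : PiLp (p:ℝ≥0∞) (fun _ : Fin 2 => ℝ) → ℝ × ℝ :=
    fun x => (Real.sign (x 0), if x 0 = (0:ℝ) then x 1 else x 1 / x 0) with hf
  set TS : Finset (ℝ × ℝ) := ({-1, 0, 1} : Finset ℝ) ×ˢ (({-1, 1} : Finset ℝ) ∪ W) with hTS
  have hmaps : ∀ x ∈ M, f x ∈ (TS : Set (ℝ × ℝ)) := by
    intro x hx
    simp only [hTS, hf, Finset.coe_product, Set.mem_prod, Finset.mem_coe, Finset.mem_insert,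
      Finset.mem_singleton, Finset.mem_union]
    constructor
    · rcases lt_trichotomy (x 0) 0 with h | h | h
      · left; exact Real.sign_of_neg h
      · right; left; rw [h]; exact Real.sign_zero
      · right; right; exact Real.sign_of_pos h
    · by_cases hx0 : x 0 = 0
      · rw [if_pos hx0]
        have h1 : |x 1| ^ p = 1 := by
          have := hnorm x hx
          rw [hx0] at this
          simp only [abs_zero] at this
          rw [zero_pow (by omega : p ≠ 0)] at this
          linarith
        have h2 : |x 1| = 1 :=
          (pow_left_inj₀ (abs_nonneg (x 1)) zero_le_one (by omega : p ≠ 0)).mp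
            (by rw [h1, one_pow])
        rcases abs_eq (by norm_num : (0:ℝ) ≤ 1) |>.mp h2 with h | h
        · left; right; exact h
        · left; left; exact h
      · rw [if_neg hx0]
        right; exact ht x hx hx0
  have hinj : Set.InjOn f M := by
    intro x hx y hy hxy
    rw [hf, Prod.mk.injEq] at hxy
    obtain ⟨hs, hsnd⟩ := hxy
    by_cases hx0 : x 0 = 0
    · have hy0 : y 0 = 0 := by
        rw [← Real.sign_eq_zero_iff]
        rw [← hs, hx0, Real.sign_zero]
      rw [if_pos hx0, if_pos hy0] at hsnd
      ext i
      fin_cases i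
      · exact hx0.trans hy0.symm
      · exact hsnd
    · have hy0 : y 0 ≠ 0 := by
        intro h
        apply hx0
        rw [← Real.sign_eq_zero_iff, hs, h, Real.sign_zero]
      rw [if_neg hx0, if_neg hy0] at hsnd
      set t := x 1 / x 0 with htd
      have hx1 : x 1 = t * x 0 := by
        rw [htd]; exact (div_mul_cancel₀ _ hx0).symm
      have hy1 : y 1 = t * y 0 := by
        rw [hsnd]; exact (div_mul_cancel₀ _ hy0).symm
      have hnx := hnorm x hx
      have hny := hnorm y hy
      rw [hx1] at hnx
      rw [hy1] at hny
      rw [abs_mul, mul_pow] at hnx hny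
      have hpos : 0 < 1 + |t| ^ p := by positivity
      have hxy0 : |x 0| ^ p = |y 0| ^ p := by
        have h1 : |x 0| ^ p * (1 + |t| ^ p) = 1 := by linarith
        have h2 : |y 0| ^ p * (1 + |t| ^ p) = 1 := by linarith
        have := h1.trans h2.symm
        exact mul_right_cancel₀ hpos.ne' this
      have habs : |x 0| = |y 0| :=
        (pow_left_inj₀ (abs_nonneg _) (abs_nonneg _) (by omega : p ≠ 0)).mp hxy0
      have hx0y0 : x 0 = y 0 := by
        rcases lt_trichotomy (x 0) 0 with h | h | h
        · have hsx : Real.sign (y 0) = -1 := by rw [← hs]; exact Real.sign_of_neg h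
          have hy0neg : y 0 < 0 := by
            rcases lt_trichotomy (y 0) 0 with h2 | h2 | h2
            · exact h2
            · exfalso; rw [h2, Real.sign_zero] at hsx; norm_num at hsx
            · exfalso; rw [Real.sign_of_pos h2] at hsx; norm_num at hsx
          have := habs
          rw [abs_of_neg h, abs_of_neg hy0neg] at this
          linarith
        · exact absurd h hx0
        · have hsx : Real.sign (y 0) = 1 := by rw [← hs]; exact Real.sign_of_pos h
          have hy0pos : 0 < y 0 := by
            rcases lt_trichotomy (y 0) 0 with h2 | h2 | h2
            · exfalso; rw [Real.sign_of_neg h2] at hsx; norm_num at hsx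
            · exfalso; rw [h2, Real.sign_zero] at hsx; norm_num at hsx
            · exact h2
          have := habs
          rw [abs_of_pos h, abs_of_pos hy0pos] at this
          exact this
      ext i
      fin_cases i
      · exact hx0y0
      · show x 1 = y 1
        rw [hx1, hy1, hx0y0]
  have himg : f '' M ⊆ (TS : Set (ℝ × ℝ)) := by
    rintro _ ⟨x, hx, rfl⟩
    exact hmaps x hx
  have hfin : M.Finite := Set.Finite.of_finite_image (TS.finite_toSet.subset himg) hinj
  refine ⟨hfin, ?_⟩
  have h1 : M.ncard = (f '' M).ncard := (Set.ncard_image_of_injOn hinj).symm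
  have h2 : (f '' M).ncard ≤ (TS : Set (ℝ × ℝ)).ncard :=
    Set.ncard_le_ncard himg TS.finite_toSet
  rw [Set.ncard_coe_finset] at h2
  have h3 : TS.card ≤ 3 * (2 + W.card) := by
    rw [hTS, Finset.card_product]
    have c1 : ({-1, 0, 1} : Finset ℝ).card ≤ 3 := by
      apply le_trans (Finset.card_insert_le _ _)
      have h := Finset.card_insert_le (0:ℝ) ({1} : Finset ℝ)
      simp only [Finset.card_singleton] at h
      omega
    have c2 : (({-1, 1} : Finset ℝ) ∪ W).card ≤ 2 + W.card := by
      apply le_trans (Finset.card_union_le _ _)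
      have : ({-1, 1} : Finset ℝ).card ≤ 2 := by
        apply le_trans (Finset.card_insert_le _ _)
        simp
      omega
    exact Nat.mul_le_mul c1 c2
  have h4 : 3 * (2 + W.card) ≤ 2 * (8 * p - 5) := by omega
  omega

lemma norm_pow_eq (p : ℕ) (hp : 2 ≤ p) [Fact (1 ≤ (p : ℝ≥0∞))]
    (y : PiLp (p:ℝ≥0∞) (fun _ : Fin 2 => ℝ)) :
    ‖y‖ ^ p = |y 0| ^ p + |y 1| ^ p := by
  have hp0 : (0:ℝ) < (p:ℝ) := by
    have : 0 < p := by omega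
    exact_mod_cast this
  have htoReal : ((p:ℝ≥0∞)).toReal = (p:ℝ) := rfl
  have h1 : ‖y‖ = (|y 0| ^ (p:ℝ) + |y 1| ^ (p:ℝ)) ^ (1/(p:ℝ)) := by
    rw [PiLp.norm_eq_sum (by rw [htoReal]; exact hp0), htoReal, Fin.sum_univ_two,
      Real.norm_eq_abs, Real.norm_eq_abs]
  have hS : (0:ℝ) ≤ |y 0| ^ (p:ℝ) + |y 1| ^ (p:ℝ) := by positivity
  rw [h1, ← Real.rpow_natCast ((|y 0| ^ (p:ℝ) + |y 1| ^ (p:ℝ)) ^ (1/(p:ℝ))) p,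
    ← Real.rpow_mul hS, one_div, inv_mul_cancel₀ hp0.ne', Real.rpow_one,
    ← Real.rpow_natCast |y 0| p, ← Real.rpow_natCast |y 1| p]

end Stmt17Aux

open Stmt17Aux Polynomial

theorem stmt17 (p : ℕ) (hp : 2 ≤ p) [Fact (1 ≤ (p : ℝ≥0∞))]
    (T : PiLp (p : ℝ≥0∞) (fun _ : Fin 2 => ℝ) →L[ℝ] PiLp (p : ℝ≥0∞) (fun _ : Fin 2 => ℝ))
    (hnotiso : ¬ ∃ (c : ℝ) (U : PiLp (p : ℝ≥0∞) (fun _ : Fin 2 => ℝ) →L[ℝ]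
        PiLp (p : ℝ≥0∞) (fun _ : Fin 2 => ℝ)),
      (∀ v, ‖U v‖ = ‖v‖) ∧ T = c • U) :
    {x : PiLp (p : ℝ≥0∞) (fun _ : Fin 2 => ℝ) | ‖x‖ = 1 ∧ ‖T x‖ = ‖T‖}.Finite ∧
      {x : PiLp (p : ℝ≥0∞) (fun _ : Fin 2 => ℝ) | ‖x‖ = 1 ∧ ‖T x‖ = ‖T‖}.ncard
        ≤ 2 * (8 * p - 5) := by
  classical
  set M : Set (PiLp (p : ℝ≥0∞) (fun _ : Fin 2 => ℝ)) :=
    {x | ‖x‖ = 1 ∧ ‖T x‖ = ‖T‖} with hM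
  -- basic setup
  set E0 : PiLp (p:ℝ≥0∞) (fun _ : Fin 2 => ℝ) :=
    (WithLp.equiv (p:ℝ≥0∞) (∀ _ : Fin 2, ℝ)).symm ![1, 0] with hE0
  set E1 : PiLp (p:ℝ≥0∞) (fun _ : Fin 2 => ℝ) :=
    (WithLp.equiv (p:ℝ≥0∞) (∀ _ : Fin 2, ℝ)).symm ![0, 1] with hE1
  set α : ℝ := T E0 0 with hα
  set γ : ℝ := T E0 1 with hγ
  set β : ℝ := T E1 0 with hβ
  set δ : ℝ := T E1 1 with hδ
  have hexpand : ∀ y : PiLp (p:ℝ≥0∞) (fun _ : Fin 2 => ℝ),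
      T y = y 0 • T E0 + y 1 • T E1 := by
    intro y
    have hy : y = y 0 • E0 + y 1 • E1 := by
      ext i
      fin_cases i
      · show y 0 = (y 0 • E0 + y 1 • E1) 0
        simp [PiLp.add_apply, PiLp.smul_apply, hE0, hE1]
      · show y 1 = (y 0 • E0 + y 1 • E1) 1
        simp [PiLp.add_apply, PiLp.smul_apply, hE0, hE1]
    calc T y = T (y 0 • E0 + y 1 • E1) := by rw [← hy]
    _ = y 0 • T E0 + y 1 • T E1 := by rw [map_add, map_smul, map_smul]
  have happ0 : ∀ y : PiLp (p:ℝ≥0∞) (fun _ : Fin 2 => ℝ),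
      T y 0 = α * y 0 + β * y 1 := by
    intro y
    rw [hexpand y]
    simp [PiLp.add_apply, PiLp.smul_apply, smul_eq_mul, hα, hβ]
    ring
  have happ1 : ∀ y : PiLp (p:ℝ≥0∞) (fun _ : Fin 2 => ℝ),
      T y 1 = γ * y 0 + δ * y 1 := by
    intro y
    rw [hexpand y]
    simp [PiLp.add_apply, PiLp.smul_apply, smul_eq_mul, hγ, hδ]
    ring
  have hT0 : T ≠ 0 := by
    intro h
    apply hnotiso
    refine ⟨0, ContinuousLinearMap.id ℝ _, fun v => rfl, ?_⟩
    rw [h]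
    exact (zero_smul ℝ (ContinuousLinearMap.id ℝ (PiLp (p:ℝ≥0∞) (fun _ : Fin 2 => ℝ)))).symm
  have hTnorm : 0 < ‖T‖ := norm_pos_iff.mpr hT0
  set Cn : ℝ := ‖T‖ ^ p with hCn
  have hCnpos : 0 < Cn := by positivity
  set q : ℕ := p - 1 with hq
  have hq1 : 1 ≤ q := by omega
  have hpq : p = q + 1 := by omega
  -- upper bound inequality
  have hub : ∀ u v : ℝ, |α*u+β*v|^p + |γ*u+δ*v|^p ≤ Cn * (|u|^p + |v|^p) := by
    intro u v
    set y : PiLp (p:ℝ≥0∞) (fun _ : Fin 2 => ℝ) :=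
      (WithLp.equiv (p:ℝ≥0∞) (∀ _ : Fin 2, ℝ)).symm ![u, v] with hy
    have hy0 : y 0 = u := rfl
    have hy1 : y 1 = v := rfl
    have h1 : ‖T y‖ ≤ ‖T‖ * ‖y‖ := T.le_opNorm y
    have h2 : ‖T y‖ ^ p ≤ (‖T‖ * ‖y‖) ^ p :=
      pow_le_pow_left₀ (norm_nonneg _) h1 p
    rw [mul_pow] at h2
    rw [norm_pow_eq p hp (T y), norm_pow_eq p hp y, happ0 y, happ1 y, hy0, hy1] at h2
    exact h2
  -- proportionality contradiction
  have hPROP : (∀ a b : ℝ, |α*a+β*b|^p + |γ*a+δ*b|^p = Cn * (|a|^p + |b|^p)) → False := by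
    intro hid
    apply hnotiso
    refine ⟨‖T‖, ‖T‖⁻¹ • T, ?_, ?_⟩
    · intro v
      have h1 : ‖T v‖ ^ p = (‖T‖ * ‖v‖) ^ p := by
        rw [norm_pow_eq p hp (T v), happ0 v, happ1 v, hid (v 0) (v 1), mul_pow,
          norm_pow_eq p hp v, hCn]
      have h2 : ‖T v‖ = ‖T‖ * ‖v‖ :=
        (pow_left_inj₀ (norm_nonneg _) (by positivity) (by omega : p ≠ 0)).mp h1
      rw [ContinuousLinearMap.smul_apply, norm_smul, Real.norm_eq_abs,
        abs_of_pos (inv_pos.mpr hTnorm), h2, ← mul_assoc, inv_mul_cancel₀ hTnorm.ne', one_mul]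
    · rw [smul_smul, mul_inv_cancel₀ hTnorm.ne', one_smul]
  -- norms of elements of M
  have hnormM : ∀ x ∈ M, |x 0| ^ p + |x 1| ^ p = 1 := by
    intro x hx
    rw [← norm_pow_eq p hp x, hx.1, one_pow]
  -- the maximizer equations
  have heqs : ∀ x ∈ M, x 0 ≠ 0 →
      (α * sfun p (α + β*(x 1 / x 0)) + γ * sfun p (γ + δ*(x 1 / x 0)) = Cn ∧
       β * sfun p (α + β*(x 1 / x 0)) + δ * sfun p (γ + δ*(x 1 / x 0))
         = Cn * sfun p (x 1 / x 0)) := by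
    intro x hx hx0
    set a : ℝ := x 0 with ha
    set b : ℝ := x 1 with hb
    set t : ℝ := b / a with htd
    have hbt : b = t * a := by rw [htd]; exact (div_mul_cancel₀ _ hx0).symm
    have heqx : |α*a+β*b|^p + |γ*a+δ*b|^p = Cn * (|a|^p + |b|^p) := by
      have h1 : ‖T x‖ ^ p = Cn := by rw [hx.2, hCn]
      have h2 : |a|^p + |b|^p = 1 := hnormM x hx
      rw [norm_pow_eq p hp (T x), happ0 x, happ1 x] at h1
      rw [h2, mul_one]
      exact h1
    have E1 := one_dir p hp α β γ δ Cn a b hub heqx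
    have E2 : β * sfun p (α*a+β*b) + δ * sfun p (γ*a+δ*b) = Cn * sfun p b := by
      have hub' : ∀ u v : ℝ, |β*u+α*v|^p + |δ*u+γ*v|^p ≤ Cn * (|u|^p + |v|^p) := by
        intro u v
        have := hub v u
        calc |β*u+α*v|^p + |δ*u+γ*v|^p = |α*v+β*u|^p + |γ*v+δ*u|^p := by ring_nf
          _ ≤ Cn * (|v|^p + |u|^p) := this
          _ = Cn * (|u|^p + |v|^p) := by ring
      have heqx' : |β*b+α*a|^p + |δ*b+γ*a|^p = Cn * (|b|^p + |a|^p) := by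
        calc |β*b+α*a|^p + |δ*b+γ*a|^p = |α*a+β*b|^p + |γ*a+δ*b|^p := by ring_nf
          _ = Cn * (|a|^p + |b|^p) := heqx
          _ = Cn * (|b|^p + |a|^p) := by ring
      have := one_dir p hp β α δ γ Cn b a hub' heqx'
      calc β * sfun p (α*a+β*b) + δ * sfun p (γ*a+δ*b)
          = β * sfun p (β*b+α*a) + δ * sfun p (δ*b+γ*a) := by ring_nf
        _ = Cn * sfun p b := this
    have hsa : sfun p a ≠ 0 := fun h => hx0 ((sfun_eq_zero_iff p a).mp h)
    have hAx : α*a+β*b = (α + β*t) * a := by rw [hbt]; ring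
    have hBx : γ*a+δ*b = (γ + δ*t) * a := by rw [hbt]; ring
    rw [hAx, hBx, sfun_mul, sfun_mul] at E1 E2
    have hsb : sfun p b = sfun p t * sfun p a := by rw [hbt, sfun_mul]
    rw [hsb] at E2
    constructor
    · have h3 : (α * sfun p (α + β*t) + γ * sfun p (γ + δ*t) - Cn) * sfun p a = 0 := by
        linear_combination E1
      rcases mul_eq_zero.mp h3 with h | h
      · linarith [sub_eq_zero.mp (by linarith : α * sfun p (α + β*t) + γ * sfun p (γ + δ*t) - Cn - 0 = 0)]
      · exact absurd h hsa
    · have h3 : (β * sfun p (α + β*t) + δ * sfun p (γ + δ*t) - Cn * sfun p t) * sfun p a = 0 := by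
        linear_combination E2
      rcases mul_eq_zero.mp h3 with h | h
      · linarith
      · exact absurd h hsa
  -- T = 0 helper when all entries vanish
  have hTzero : α = 0 → β = 0 → γ = 0 → δ = 0 → False := by
    intro h1 h2 h3 h4
    apply hT0
    ext y i
    fin_cases i
    · show T y 0 = 0
      rw [happ0 y, h1, h2]; ring
    · show T y 1 = 0
      rw [happ1 y, h3, h4]; ring
  -- sigma facts
  have hsigma : ∀ t : ℝ, ((if 0 ≤ t then (1:ℝ) else (-1)^p) = 1 ∨
      (if 0 ≤ t then (1:ℝ) else (-1)^p) = -1) := by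
    intro t
    by_cases h : 0 ≤ t
    · left; rw [if_pos h]
    · rw [if_neg h]
      rcases Nat.even_or_odd p with he | ho
      · left; exact he.neg_one_pow
      · right; exact ho.neg_one_pow
  have hsigma1 : ∀ t : ℝ, q = 1 → (if 0 ≤ t then (1:ℝ) else (-1)^p) = 1 := by
    intro t hq1'
    have hp2 : p = 2 := by omega
    by_cases h : 0 ≤ t
    · rw [if_pos h]
    · rw [if_neg h, hp2]; norm_num
  -- main case split
  by_cases hD : α*δ - β*γ = 0
  · -- degenerate case
    set W : Finset ℝ :=
      (Spoly q (α*1) β).roots.toFinset ∪ (Spoly q (α*(-1)) β).roots.toFinset ∪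
      ((Spoly q (γ*1) δ).roots.toFinset ∪ (Spoly q (γ*(-1)) δ).roots.toFinset) with hW
    have hWcard : W.card ≤ 4 * (p - 1) := by
      have b1 : ∀ c0 c1 : ℝ, (Spoly q c0 c1).roots.toFinset.card ≤ q := by
        intro c0 c1
        have h1 := Multiset.toFinset_card_le (Spoly q c0 c1).roots
        have h2 := Polynomial.card_roots' (Spoly q c0 c1)
        have h3 := Spoly_natDegree q c0 c1
        omega
      have := Finset.card_union_le ((Spoly q (α*1) β).roots.toFinset ∪ (Spoly q (α*(-1)) β).roots.toFinset)
        ((Spoly q (γ*1) δ).roots.toFinset ∪ (Spoly q (γ*(-1)) δ).roots.toFinset)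
      have h4 := Finset.card_union_le (Spoly q (α*1) β).roots.toFinset (Spoly q (α*(-1)) β).roots.toFinset
      have h5 := Finset.card_union_le (Spoly q (γ*1) δ).roots.toFinset (Spoly q (γ*(-1)) δ).roots.toFinset
      have := b1 (α*1) β
      have := b1 (α*(-1)) β
      have := b1 (γ*1) δ
      have := b1 (γ*(-1)) δ
      rw [hW]
      omega
    have htW : ∀ x ∈ M, x 0 ≠ 0 → x 1 / x 0 ∈ W := by
      intro x hx hx0
      obtain ⟨he1, he2⟩ := heqs x hx hx0
      set t : ℝ := x 1 / x 0 with htd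
      set σ : ℝ := if 0 ≤ t then (1:ℝ) else (-1)^p with hσd
      have hσcases : σ = 1 ∨ σ = -1 := by rw [hσd]; exact hsigma t
      have hσne : σ ≠ 0 := by rcases hσcases with h | h <;> rw [h] <;> norm_num
      have hst : sfun p t = σ * t ^ q := by
        rw [hσd, hq]; exact sfun_sigma p hp t
      have hDu : (α*δ - β*γ) * sfun p (α + β*t) = Cn * (δ - γ * sfun p t) := by
        linear_combination δ * he1 - γ * he2
      have hDv : (α*δ - β*γ) * sfun p (γ + δ*t) = Cn * (α * sfun p t - β) := by
        linear_combination α * he2 - β * he1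
      rw [hD, zero_mul] at hDu hDv
      have hαt : α * sfun p t = β := by
        have : Cn * (α * sfun p t - β) = 0 := hDv.symm
        rcases mul_eq_zero.mp this with h | h
        · exact absurd h hCnpos.ne'
        · linarith [sub_eq_zero.mp h]
      have hγt : γ * sfun p t = δ := by
        have : Cn * (δ - γ * sfun p t) = 0 := hDu.symm
        rcases mul_eq_zero.mp this with h | h
        · exact absurd h hCnpos.ne'
        · linarith [sub_eq_zero.mp h]
      by_cases hA : α = 0
      · by_cases hG : γ = 0
        · exfalso
          apply hTzero hA _ hG
          · rw [← hγt, hG, zero_mul]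
          · rw [← hαt, hA, zero_mul]
        · have hroot : (Spoly q (γ*σ) δ).eval t = 0 := by
            rw [Spoly_eval]
            have h5 : γ * (σ * t^q) = δ := by rw [← hst]; exact hγt
            linear_combination h5
          have hne : Spoly q (γ*σ) δ ≠ 0 := Spoly_ne_zero q hq1 _ _ (mul_ne_zero hG hσne)
          have hmem : t ∈ (Spoly q (γ*σ) δ).roots.toFinset := by
            rw [Multiset.mem_toFinset, Polynomial.mem_roots']
            exact ⟨hne, hroot⟩
          rw [hW]
          rcases hσcases with h | h
          · rw [h] at hmem
            exact Finset.mem_union_right _ (Finset.mem_union_left _ hmem)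
          · rw [h] at hmem
            exact Finset.mem_union_right _ (Finset.mem_union_right _ hmem)
      · have hroot : (Spoly q (α*σ) β).eval t = 0 := by
          rw [Spoly_eval]
          have h5 : α * (σ * t^q) = β := by rw [← hst]; exact hαt
          linear_combination h5
        have hne : Spoly q (α*σ) β ≠ 0 := Spoly_ne_zero q hq1 _ _ (mul_ne_zero hA hσne)
        have hmem : t ∈ (Spoly q (α*σ) β).roots.toFinset := by
          rw [Multiset.mem_toFinset, Polynomial.mem_roots']
          exact ⟨hne, hroot⟩
        rw [hW]
        rcases hσcases with h | h
        · rw [h] at hmem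
          exact Finset.mem_union_left _ (Finset.mem_union_left _ hmem)
        · rw [h] at hmem
          exact Finset.mem_union_left _ (Finset.mem_union_right _ hmem)
    exact endgame p hp M W hWcard hnormM htW
  · -- nondegenerate case
    set D : ℝ := α*δ - β*γ with hDdef
    set PP : ℝ → Polynomial ℝ := fun σ => Ppoly q D α β Cn δ (-(σ*γ)) with hPP
    set RR : ℝ → Polynomial ℝ := fun σ => Ppoly q D γ δ Cn (-β) (σ*α) with hRR
    set pick : ℝ → Finset ℝ := fun σ =>
      if PP σ = 0 then (RR σ).roots.toFinset else (PP σ).roots.toFinset with hpick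
    set W : Finset ℝ := pick 1 ∪ pick (-1) with hW
    have hpickcard : ∀ σ : ℝ, (pick σ).card ≤ 2*q := by
      intro σ
      by_cases h : PP σ = 0
      · simp only [hpick, if_pos h]
        have h1 := Multiset.toFinset_card_le (RR σ).roots
        have h2 := Polynomial.card_roots' (RR σ)
        have h3 : (RR σ).natDegree ≤ 2*q := Ppoly_natDegree q D γ δ Cn (-β) (σ*α)
        omega
      · simp only [hpick, if_neg h]
        have h1 := Multiset.toFinset_card_le (PP σ).roots
        have h2 := Polynomial.card_roots' (PP σ)
        have h3 : (PP σ).natDegree ≤ 2*q := Ppoly_natDegree q D α β Cn δ (-(σ*γ))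
        omega
    have hWcard : W.card ≤ 4 * (p - 1) := by
      have := Finset.card_union_le (pick 1) (pick (-1))
      have := hpickcard 1
      have := hpickcard (-1)
      rw [hW]
      omega
    have htW : ∀ x ∈ M, x 0 ≠ 0 → x 1 / x 0 ∈ W := by
      intro x hx hx0
      obtain ⟨he1, he2⟩ := heqs x hx hx0
      set t : ℝ := x 1 / x 0 with htd
      set σ : ℝ := if 0 ≤ t then (1:ℝ) else (-1)^p with hσd
      have hσcases : σ = 1 ∨ σ = -1 := by rw [hσd]; exact hsigma t
      have hσq1 : q = 1 → σ = 1 := by rw [hσd]; exact fun h => hsigma1 t h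
      have hst : sfun p t = σ * t ^ q := by
        rw [hσd, hq]; exact sfun_sigma p hp t
      have hDu : D * sfun p (α + β*t) = Cn * (δ - γ * sfun p t) := by
        rw [hDdef]; linear_combination δ * he1 - γ * he2
      have hDv : D * sfun p (γ + δ*t) = Cn * (α * sfun p t - β) := by
        rw [hDdef]; linear_combination α * he2 - β * he1
      have hsfq : ∀ w : ℝ, (sfun p w)^2 = (w^q)^2 := by
        intro w
        rw [sfun_sq p hp w, hq, ← pow_mul, mul_comm q 2]
      have hPeval : (PP σ).eval t = 0 := by
        rw [hPP]
        show (Ppoly q D α β Cn δ (-(σ*γ))).eval t = 0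
        rw [Ppoly_eval]
        have h1 : (D * ((α + β*t)^q))^2 = (D * sfun p (α + β*t))^2 := by
          rw [mul_pow, mul_pow, hsfq]
        have h2 : (Cn * (δ + (-(σ*γ))*t^q))^2 = (Cn * (δ - γ * sfun p t))^2 := by
          rw [hst]; ring_nf
        rw [h1, h2, hDu]
        ring
      have hReval : (RR σ).eval t = 0 := by
        rw [hRR]
        show (Ppoly q D γ δ Cn (-β) (σ*α)).eval t = 0
        rw [Ppoly_eval]
        have h1 : (D * ((γ + δ*t)^q))^2 = (D * sfun p (γ + δ*t))^2 := by
          rw [mul_pow, mul_pow, hsfq]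
        have h2 : (Cn * ((-β) + (σ*α)*t^q))^2 = (Cn * (α * sfun p t - β))^2 := by
          rw [hst]; ring_nf
        rw [h1, h2, hDv]
        ring
      by_cases hPz : PP σ = 0
      · by_cases hRz : RR σ = 0
        · exfalso
          -- both identically zero: extract identities and contradict
          have hIc := Ppoly_zero_cases q D α β Cn δ (-(σ*γ)) (by rw [hPP] at hPz; exact hPz)
          have hIIc := Ppoly_zero_cases q D γ δ Cn (-β) (σ*α) (by rw [hRR] at hRz; exact hRz)
          have hIex : ∃ e : ℝ, (e = Cn ∨ e = -Cn) ∧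
              ∀ s : ℝ, (α*δ-β*γ) * (α + β*s)^q = e * (δ - σ*γ*s^q) := by
            rcases hIc with h | h
            · exact ⟨Cn, Or.inl rfl, fun s => by
                have := h s; rw [hDdef] at this; linear_combination this⟩
            · exact ⟨-Cn, Or.inr rfl, fun s => by
                have := h s; rw [hDdef] at this; linear_combination this⟩
          have hIIex : ∃ e' : ℝ, (e' = Cn ∨ e' = -Cn) ∧
              ∀ s : ℝ, (α*δ-β*γ) * (γ + δ*s)^q = e' * (σ*α*s^q - β) := by
            rcases hIIc with h | h
            · exact ⟨Cn, Or.inl rfl, fun s => by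
                have := h s; rw [hDdef] at this; linear_combination this⟩
            · exact ⟨-Cn, Or.inr rfl, fun s => by
                have := h s; rw [hDdef] at this; linear_combination this⟩
          obtain ⟨e, he, hI⟩ := hIex
          obtain ⟨e', he', hII⟩ := hIIex
          exact hPROP (prop_of_identities p q hq1 hpq α β γ δ Cn σ e e'
            hD hCnpos hσcases hσq1 he he' hI hII)
        · have hmem : t ∈ (RR σ).roots.toFinset := by
            rw [Multiset.mem_toFinset, Polynomial.mem_roots']
            exact ⟨hRz, hReval⟩
          have hpmem : t ∈ pick σ := by
            rw [hpick]
            show t ∈ (if PP σ = 0 then (RR σ).roots.toFinset else (PP σ).roots.toFinset)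
            rw [if_pos hPz]
            exact hmem
          rw [hW]
          rcases hσcases with h | h
          · exact Finset.mem_union_left _ (h ▸ hpmem)
          · exact Finset.mem_union_right _ (h ▸ hpmem)
      · have hmem : t ∈ (PP σ).roots.toFinset := by
          rw [Multiset.mem_toFinset, Polynomial.mem_roots']
          exact ⟨hPz, hPeval⟩
        have hpmem : t ∈ pick σ := by
          rw [hpick]
          show t ∈ (if PP σ = 0 then (RR σ).roots.toFinset else (PP σ).roots.toFinset)
          rw [if_neg hPz]
          exact hmem
        rw [hW]
        rcases hσcases with h | h
        · exact Finset.mem_union_left _ (h ▸ hpmem)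
        · exact Finset.mem_union_right _ (h ▸ hpmem)
    exact endgame p hp M W hWcard hnormM htW
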